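/- Let A and B be unital C*-algebras and suppose θ is an inner *-automorphism of A ⊗^γ B of the form θ = (μ ⊗^γ ρ) ∘ τ, where μ : B → A and ρ : A → B are *-isomorphisms and τ is the flip map. Then A and B are simple C*-algebras. -/

import Mathlib

/-- `ι` exhibits the complete unital normed algebra `T` as the Banach space projective
tensor product `A ⊗^γ B` of the unital Banach algebras `A` and `B`: the image of `ι`
has dense span, `‖ι a b‖` is dominated by the projective cross norm, and every
contractive bilinear functional extends to a contractive functional on `T` (which pins
down the norm of `T` as the projective tensor norm). -/
structure IsProjectiveTensorProduct
    (A B T : Type) [NormedRing A] [NormedAlgebra ℂ A]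
    [NormedRing B] [NormedAlgebra ℂ B]
    [NormedRing T] [NormedAlgebra ℂ T] [CompleteSpace T]
    (ι : A →L[ℂ] B →L[ℂ] T) : Prop where
  map_one' : ι 1 1 = 1
  map_mul' : ∀ (a c : A) (b d : B), ι a b * ι c d = ι (a * c) (b * d)
  norm_le' : ∀ (a : A) (b : B), ‖ι a b‖ ≤ ‖a‖ * ‖b‖
  dense' : Dense ((Submodule.span ℂ (Set.range fun p : A × B => ι p.1 p.2) : Submodule ℂ T) : Set T)
  lift' : ∀ β : A →L[ℂ] B →L[ℂ] ℂ, ‖β‖ ≤ 1 →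
    ∃ g : T →L[ℂ] ℂ, ‖g‖ ≤ 1 ∧ ∀ (a : A) (b : B), g (ι a b) = β a b

/-- `ι` exhibits `T` as the Banach space projective tensor product `A ⊗^γ B` of the
unital C*-algebras `A` and `B`, as a Banach `*`-algebra. -/
structure IsProjectiveStarTensorProduct
    (A B T : Type) [CStarAlgebra A] [CStarAlgebra B]
    [NormedRing T] [StarRing T] [NormedAlgebra ℂ T] [CompleteSpace T]
    (ι : A →L[ℂ] B →L[ℂ] T)
    extends IsProjectiveTensorProduct A B T ι : Prop where
  map_star' : ∀ (a : A) (b : B), star (ι a b) = ι (star a) (star b)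

/-- Hahn–Banach: a continuous functional vanishing on a closed submodule and
nonzero at a point outside of it. -/
theorem exists_functional_vanishing_of_not_mem {E : Type} [NormedAddCommGroup E]
    [NormedSpace ℂ E] {S : Submodule ℂ E} (hS : IsClosed (S : Set E))
    {x : E} (hx : x ∉ S) : ∃ φ : E →L[ℂ] ℂ, φ x ≠ 0 ∧ ∀ y ∈ S, φ y = 0 := by
  haveI : IsClosed (S : Set E) := hS
  let π : E →L[ℂ] E ⧸ S :=
    LinearMap.mkContinuous S.mkQ 1 fun y => by
      simpa using Submodule.Quotient.norm_mk_le S y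
  have hπx : π x ≠ 0 := by
    simpa [π, Submodule.Quotient.mk_eq_zero] using hx
  obtain ⟨ψ, -, hψ⟩ := exists_dual_vector ℂ (π x) (norm_ne_zero_iff.2 hπx)
  refine ⟨ψ.comp π, ?_, ?_⟩
  · simp only [ContinuousLinearMap.comp_apply, hψ]
    exact Complex.ofReal_ne_zero.2 (norm_ne_zero_iff.2 hπx)
  · intro y hy
    have : π y = 0 := by simpa [π, Submodule.Quotient.mk_eq_zero] using hy
    simp [ContinuousLinearMap.comp_apply, this]

/-- Key auxiliary lemma: with the hypotheses of the main theorem, `A` is simple. -/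
theorem left_simple_of_flip_inner {A B T : Type} [CStarAlgebra A] [CStarAlgebra B]
    [NormedRing T] [StarRing T] [NormedAlgebra ℂ T] [CompleteSpace T]
    {ι : A →L[ℂ] B →L[ℂ] T} (hT : IsProjectiveStarTensorProduct A B T ι)
    (μ : B ≃⋆ₐ[ℂ] A) (ρ : A ≃⋆ₐ[ℂ] B) (u : T)
    (hinner : ∀ (a : A) (b : B), ι (μ b) (ρ a) = u * ι a b * star u) :
    ∀ I : TwoSidedIdeal A, IsClosed (I : Set A) → I = ⊥ ∨ I = ⊤ := by
  intro I hIc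
  by_cases hbot : I = ⊥
  · exact Or.inl hbot
  right
  by_contra htop
  have h1 : (1 : A) ∉ I := fun h => htop (I.eq_top h)
  obtain ⟨a, haI, ha0⟩ : ∃ a, a ∈ I ∧ a ≠ 0 := by
    by_contra h
    push_neg at h
    exact hbot (TwoSidedIdeal.ext fun x =>
      ⟨fun hx => (TwoSidedIdeal.mem_bot _).2 (h x hx),
       fun hx => ((TwoSidedIdeal.mem_bot _).1 hx) ▸ I.zero_mem⟩)
  -- the ideal as a complex submodule
  let S : Submodule ℂ A :=
    { carrier := I
      add_mem' := fun hx hy => I.add_mem hx hy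
      zero_mem' := I.zero_mem
      smul_mem' := fun c x hx => by
        simpa [Algebra.smul_def] using I.mul_mem_left (algebraMap ℂ A c) x hx }
  have hScl : IsClosed (S : Set A) := hIc
  have h1S : (1 : A) ∉ S := h1
  obtain ⟨φ, hφ1, hφS⟩ := exists_functional_vanishing_of_not_mem hScl h1S
  have hρa : ρ a ≠ 0 := fun h => ha0 (by
    have := ρ.injective (h.trans (map_zero ρ).symm)
    simpa using this)
  obtain ⟨ψ, -, hψval⟩ := exists_dual_vector ℂ (ρ a) (norm_ne_zero_iff.2 hρa)
  have hψa : ψ (ρ a) ≠ 0 := by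
    rw [hψval]
    exact Complex.ofReal_ne_zero.2 (norm_ne_zero_iff.2 hρa)
  -- the contractive bilinear functional
  have hcpos : (0 : ℝ) < ‖φ‖ * ‖ψ‖ + 1 := by positivity
  set e : ℂ := ((‖φ‖ * ‖ψ‖ + 1 : ℝ) : ℂ)⁻¹ with he
  have he0 : e ≠ 0 := by
    simp only [he, ne_eq, inv_eq_zero]
    exact_mod_cast hcpos.ne'
  let β : A →L[ℂ] B →L[ℂ] ℂ := (e • φ).smulRight ψ
  have hβval : ∀ (x : A) (y : B), β x y = e * φ x * ψ y := by
    intro x y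
    simp [β, mul_assoc, mul_comm, mul_left_comm, smul_eq_mul]
  have hβnorm : ‖β‖ ≤ 1 := by
    rw [ContinuousLinearMap.norm_smulRight_apply, norm_smul]
    have h1 : ‖e‖ = (‖φ‖ * ‖ψ‖ + 1)⁻¹ := by
      rw [he, norm_inv, Complex.norm_real, Real.norm_of_nonneg hcpos.le]
    rw [h1, mul_assoc]
    calc (‖φ‖ * ‖ψ‖ + 1)⁻¹ * (‖φ‖ * ‖ψ‖)
        ≤ (‖φ‖ * ‖ψ‖ + 1)⁻¹ * (‖φ‖ * ‖ψ‖ + 1) :=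
          mul_le_mul_of_nonneg_left (by linarith) (by positivity)
      _ = 1 := inv_mul_cancel₀ hcpos.ne'
  obtain ⟨g, -, hg⟩ := hT.lift' β hβnorm
  -- the closed span of `I ⊗ B`
  set SK : Submodule ℂ T :=
    Submodule.span ℂ {t : T | ∃ i ∈ I, ∃ b : B, ι i b = t} with hSK
  set D : Submodule ℂ T :=
    Submodule.span ℂ (Set.range fun p : A × B => ι p.1 p.2) with hD
  have step1 : D ≤ SK.comap (LinearMap.mulRight ℂ (ι a 1)) := by
    rw [hD, Submodule.span_le]
    rintro _ ⟨⟨c, d⟩, rfl⟩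
    simp only [SetLike.mem_coe, Submodule.mem_comap, LinearMap.mulRight_apply]
    exact Submodule.subset_span ⟨c * a, I.mul_mem_left c a haI, d * 1, (hT.map_mul' c a d 1).symm⟩
  have step2 : ∀ (c : A) (d : B), SK ≤ SK.comap (LinearMap.mulRight ℂ (ι c d)) := by
    intro c d
    rw [hSK, Submodule.span_le]
    rintro _ ⟨i, hi, b, rfl⟩
    simp only [SetLike.mem_coe, Submodule.mem_comap, LinearMap.mulRight_apply]
    exact Submodule.subset_span ⟨i * c, I.mul_mem_right i c hi, b * d, (hT.map_mul' i c b d).symm⟩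
  have step3 : ∀ k ∈ SK, ∀ s ∈ D, k * s ∈ SK := by
    intro k hk s hs
    have : D ≤ SK.comap (LinearMap.mulLeft ℂ k) := by
      rw [hD, Submodule.span_le]
      rintro _ ⟨⟨c, d⟩, rfl⟩
      simp only [SetLike.mem_coe, Submodule.mem_comap, LinearMap.mulLeft_apply]
      exact step2 c d hk
    exact this hs
  have key : ∀ t ∈ (D : Set T), ∀ s ∈ (D : Set T), t * ι a 1 * s ∈ (SK : Set T) :=
    fun t ht s hs => step3 _ (step1 ht) s hs
  have hmem : ι (1 : A) (ρ a) ∈ closure (SK : Set T) := by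
    have h0 : ι (1 : A) (ρ a) = u * ι a 1 * star u := by
      have := hinner a 1
      rwa [map_one μ] at this
    rw [h0]
    have hcont : Continuous (Function.uncurry fun t s : T => t * ι a 1 * s) := by
      apply Continuous.mul
      · exact (continuous_fst.mul continuous_const)
      · exact continuous_snd
    exact map_mem_closure₂ (f := fun t s : T => t * ι a 1 * s) hcont (hT.dense' u) (hT.dense' (star u)) key
  have hSKker : SK ≤ LinearMap.ker (g : T →ₗ[ℂ] ℂ) := by
    rw [hSK, Submodule.span_le]
    rintro _ ⟨i, hi, b, rfl⟩
    simp only [SetLike.mem_coe, LinearMap.mem_ker, ContinuousLinearMap.coe_coe]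
    rw [hg i b, hβval, hφS i hi]
    ring
  have hg0 : g (ι 1 (ρ a)) = 0 := by
    have hcl : closure (SK : Set T) ⊆ (LinearMap.ker (g : T →ₗ[ℂ] ℂ) : Set T) := by
      apply closure_minimal hSKker
      exact ContinuousLinearMap.isClosed_ker g
    exact hcl hmem
  rw [hg 1 (ρ a), hβval] at hg0
  exact (mul_ne_zero (mul_ne_zero he0 hφ1) hψa) hg0

/-- The flip of a projective star tensor product structure. -/
theorem IsProjectiveStarTensorProduct.flip {A B T : Type} [CStarAlgebra A] [CStarAlgebra B]
    [NormedRing T] [StarRing T] [NormedAlgebra ℂ T] [CompleteSpace T]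
    {ι : A →L[ℂ] B →L[ℂ] T} (hT : IsProjectiveStarTensorProduct A B T ι) :
    IsProjectiveStarTensorProduct B A T ι.flip := by
  refine ⟨⟨?_, ?_, ?_, ?_, ?_⟩, ?_⟩
  · simpa using hT.map_one'
  · intro a c b d
    simp only [ContinuousLinearMap.flip_apply]
    rw [hT.map_mul']
  · intro a b
    simp only [ContinuousLinearMap.flip_apply]
    rw [mul_comm]
    exact hT.norm_le' b a
  · have hset : (Set.range fun p : B × A => ι.flip p.1 p.2)
        = (Set.range fun p : A × B => ι p.1 p.2) := by
      ext t
      simp only [Set.mem_range, ContinuousLinearMap.flip_apply, Prod.exists]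
      exact ⟨fun ⟨b, a, h⟩ => ⟨a, b, h⟩, fun ⟨a, b, h⟩ => ⟨b, a, h⟩⟩
    rw [hset]
    exact hT.dense'
  · intro β hβ
    obtain ⟨g, hg1, hg⟩ := hT.lift' β.flip (by rw [ContinuousLinearMap.opNorm_flip]; exact hβ)
    exact ⟨g, hg1, fun b a => by simpa using hg a b⟩
  · intro b a
    simp only [ContinuousLinearMap.flip_apply]
    exact hT.map_star' a b

/-- If the automorphism `(μ ⊗^γ ρ) ∘ τ` of `A ⊗^γ B` is inner (implemented by a
unitary of `A ⊗^γ B`), then `A` and `B` are simple: they have no nontrivial closed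
two-sided ideals. -/
theorem simple_of_flip_inner {A B T : Type} [CStarAlgebra A] [CStarAlgebra B]
    [NormedRing T] [StarRing T] [NormedAlgebra ℂ T] [CompleteSpace T]
    {ι : A →L[ℂ] B →L[ℂ] T} (hT : IsProjectiveStarTensorProduct A B T ι)
    (μ : B ≃⋆ₐ[ℂ] A) (ρ : A ≃⋆ₐ[ℂ] B)
    (u : T) (hu : star u * u = 1 ∧ u * star u = 1)
    (hinner : ∀ (a : A) (b : B), ι (μ b) (ρ a) = u * ι a b * star u) :
    (∀ I : TwoSidedIdeal A, IsClosed (I : Set A) → I = ⊥ ∨ I = ⊤) ∧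
    (∀ I : TwoSidedIdeal B, IsClosed (I : Set B) → I = ⊥ ∨ I = ⊤) := by
  constructor
  · exact left_simple_of_flip_inner hT μ ρ u hinner
  · refine left_simple_of_flip_inner hT.flip ρ μ u ?_
    intro b a
    simpa using hinner a b
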